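/- For every ε > 0 and every uniform fractional matching x in a graph G=(V,E) on n vertices (i.e., x_e = λ for all e ∈ supp(x), for some λ > 0), there exists a (4ε, ε)-split of x: vectors z⁽¹⁾, …, z⁽ᵏ⁾ ∈ ℝ_{≥0}^E, each a (4ε, ε)-coarsening of x, with pairwise disjoint supports contained in supp(x), such that Σ_i |supp(z⁽ⁱ⁾)| ≥ |supp(x)|/2. -/

import Mathlib

set_option linter.unusedSectionVars false
set_option maxHeartbeats 1000000


open Finset

variable {V : Type*} [Fintype V] [DecidableEq V]

/-- The fractional degree `x(v) := Σ_{e ∋ v} x_e` of a vertex `v` under `x`. -/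
noncomputable def fracDeg (x : Sym2 V → ℝ) (v : V) : ℝ :=
  ∑ e : Sym2 V, if v ∈ e then x e else 0

/-- `‖x‖ := Σ_e x_e`. -/
noncomputable def vnorm (x : Sym2 V → ℝ) : ℝ :=
  ∑ e : Sym2 V, x e

/-- `d^ε_V(x,y) := Σ_{v∈V} max(|x(v) − y(v)| − ε, 0)`. -/
noncomputable def dV (ε : ℝ) (x y : Sym2 V → ℝ) : ℝ :=
  ∑ v : V, max (|fracDeg x v - fracDeg y v| - ε) 0

/-- `x'` is an `(ε,δ)`-coarsening of `x`: `x' ∈ ℝ_{≥0}^E` with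
(C0) `supp(x') ⊆ supp(x)`; (C1) `|‖x‖ − ‖x'‖| ≤ ε‖x‖ + ε`; (C2) `d^ε_V(x,x') ≤ ε‖x‖ + ε`;
(C3) `x'_e ∈ {0} ∪ [δ, 2δ)` whenever `x_e < δ`, and `x'_e = x_e` whenever `x_e ≥ δ`. -/
def IsCoarsening (ε δ : ℝ) (x x' : Sym2 V → ℝ) : Prop :=
  (∀ e, 0 ≤ x' e) ∧
  (∀ e, x' e ≠ 0 → x e ≠ 0) ∧
  |vnorm x - vnorm x'| ≤ ε * vnorm x + ε ∧
  dV ε x x' ≤ ε * vnorm x + ε ∧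
  (∀ e, x e < δ → x' e = 0 ∨ (δ ≤ x' e ∧ x' e < 2 * δ)) ∧
  (∀ e, δ ≤ x e → x' e = x e)

/-- A coarsening is bounded if additionally (C4) `x'(v) ≤ x(v) + ε` for every vertex `v`. -/
def IsBoundedCoarsening (ε δ : ℝ) (x x' : Sym2 V → ℝ) : Prop :=
  IsCoarsening ε δ x x' ∧ ∀ v : V, fracDeg x' v ≤ fracDeg x v + ε

namespace StmtAux
variable {V : Type*} [DecidableEq V]


def trailEdges : List V → List (Sym2 V)
  | [] => []
  | [_] => []
  | a :: b :: l => s(a, b) :: trailEdges (b :: l)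

@[simp] lemma trailEdges_nil : trailEdges ([] : List V) = [] := rfl
@[simp] lemma trailEdges_single (a : V) : trailEdges [a] = [] := rfl
@[simp] lemma trailEdges_cons₂ (a b : V) (l : List V) :
    trailEdges (a :: b :: l) = s(a, b) :: trailEdges (b :: l) := rfl

lemma trailEdges_append_last : ∀ (p : List V) (hp : p ≠ []) (c : V),
    trailEdges (p ++ [c]) = trailEdges p ++ [s(p.getLast hp, c)]
  | [], hp, c => absurd rfl hp
  | [a], _, c => rfl
  | a :: b :: l, _, c => by
      have := trailEdges_append_last (b :: l) (by simp) c
      rw [show (b :: l) ++ [c] = b :: (l ++ [c]) by simp] at this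
      rw [show a :: b :: l ++ [c] = a :: b :: (l ++ [c]) by simp, trailEdges_cons₂, this]
      simp [List.getLast]

def IsTrail (E : Finset (Sym2 V)) (p : List V) : Prop :=
  (trailEdges p).Nodup ∧ (∀ e ∈ trailEdges p, e ∈ E) ∧ p.Chain' (· ≠ ·)

lemma exists_maximal_trail (E : Finset (Sym2 V)) (hnd : ∀ e ∈ E, ¬ e.IsDiag) :
    ∀ (n : ℕ) (p : List V), 2 ≤ p.length → IsTrail E p →
    (E \ (trailEdges p).toFinset).card ≤ n →
    ∃ (q : List V) (hq : q ≠ []), 2 ≤ q.length ∧ IsTrail E q ∧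
      (∀ e ∈ trailEdges p, e ∈ trailEdges q) ∧
      (∀ e ∈ E, e ∉ trailEdges q → q.head hq ∉ e ∧ q.getLast hq ∉ e) := by
  intro n
  induction n with
  | zero =>
    intro p hlen ht hcard
    refine ⟨p, by intro h; simp [h] at hlen, hlen, ht, fun e he => he, ?_⟩
    intro e heE henot
    exfalso
    have : e ∈ E \ (trailEdges p).toFinset := by
      simp [Finset.mem_sdiff, heE, List.mem_toFinset, henot]
    have := Finset.card_pos.mpr ⟨e, this⟩
    omega
  | succ n ih =>
    intro p hlen ht hcard
    obtain ⟨a, b, t, rfl⟩ : ∃ a b t, p = a :: b :: t := by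
      match p with
      | a :: b :: t => exact ⟨a, b, t, rfl⟩
      | [] | [a] => simp at hlen
    have hne : (a :: b :: t) ≠ [] := by simp
    set p := a :: b :: t with hp
    by_cases hex : ∃ e ∈ E, e ∉ trailEdges p ∧ (p.head hne ∈ e ∨ p.getLast hne ∈ e)
    · obtain ⟨e, heE, henot, hcase⟩ := hex
      have hmeasure : ∀ (p' : List V), trailEdges p' = e :: trailEdges p ∨
          trailEdges p' = trailEdges p ++ [e] →
          (E \ (trailEdges p').toFinset).card ≤ n := by
        intro p' h
        have hsub : (trailEdges p).toFinset ∪ {e} ⊆ (trailEdges p').toFinset := by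
          intro f hf
          simp only [Finset.mem_union, List.mem_toFinset, Finset.mem_singleton] at hf
          rcases h with h | h <;> rw [h] <;> simp [List.mem_toFinset] <;> tauto
        have h1 : E \ (trailEdges p').toFinset ⊆ (E \ (trailEdges p).toFinset).erase e := by
          intro f hf
          simp only [Finset.mem_sdiff, List.mem_toFinset] at hf
          simp only [Finset.mem_erase, Finset.mem_sdiff, List.mem_toFinset]
          refine ⟨?_, hf.1, fun hfp => hf.2 ?_⟩
          · rintro rfl; exact hf.2 (by simpa [List.mem_toFinset] using hsub (by simp))
          · exact List.mem_toFinset.mp (hsub (by simp [List.mem_toFinset, hfp]))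
        have h2 : ((E \ (trailEdges p).toFinset).erase e).card < (E \ (trailEdges p).toFinset).card := by
          apply Finset.card_erase_lt_of_mem
          simp [Finset.mem_sdiff, heE, List.mem_toFinset, henot]
        have := Finset.card_le_card h1
        omega
      rcases hcase with hmem | hmem
      · -- extend at the head
        obtain ⟨c, hspec⟩ : ∃ c, s(p.head hne, c) = e :=
          ⟨Sym2.Mem.other' hmem, Sym2.other_spec' hmem⟩
        have hca : c ≠ p.head hne := fun h =>
          hnd e heE (by rw [← hspec, h]; simp [Sym2.mk_isDiag_iff])
        have hhead : p.head hne = a := rfl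
        have hTE : trailEdges (c :: p) = e :: trailEdges p := by
          rw [hp, trailEdges_cons₂, ← hspec, hhead, Sym2.eq_swap]
        have ht' : IsTrail E (c :: p) := by
          refine ⟨?_, ?_, ?_⟩
          · rw [hTE]; exact List.nodup_cons.mpr ⟨henot, ht.1⟩
          · rw [hTE]; intro f hf
            rcases List.mem_cons.mp hf with rfl | hf
            · exact heE
            · exact ht.2.1 f hf
          · rw [hp]; exact List.isChain_cons_cons.mpr ⟨by rw [← hhead]; exact hca.symm ∘ Eq.symm, ht.2.2⟩
        obtain ⟨q, hq, h2, h3, h4, h5⟩ :=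
          ih (c :: p) (by simp [hp]) ht' (hmeasure _ (Or.inl hTE))
        exact ⟨q, hq, h2, h3, fun f hf => h4 f (by rw [hTE]; exact List.mem_cons_of_mem _ hf), h5⟩
      · -- extend at the end
        obtain ⟨c, hspec⟩ : ∃ c, s(p.getLast hne, c) = e :=
          ⟨Sym2.Mem.other' hmem, Sym2.other_spec' hmem⟩
        have hca : c ≠ p.getLast hne := fun h =>
          hnd e heE (by rw [← hspec, h]; simp [Sym2.mk_isDiag_iff])
        have hTE : trailEdges (p ++ [c]) = trailEdges p ++ [e] := by
          rw [trailEdges_append_last p hne c, hspec]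
        have ht' : IsTrail E (p ++ [c]) := by
          refine ⟨?_, ?_, ?_⟩
          · rw [hTE]
            simp only [List.nodup_append, List.nodup_cons, List.not_mem_nil, not_false_iff,
              List.nodup_nil, and_true, true_and]
            exact ⟨ht.1, by intro a ha b hb; rw [List.mem_singleton] at hb; subst hb; exact fun h => henot (h ▸ ha)⟩
          · rw [hTE]; intro f hf
            rcases List.mem_append.mp hf with hf | hf
            · exact ht.2.1 f hf
            · rcases List.mem_singleton.mp hf with rfl; exact heE
          · show List.IsChain _ (p ++ [c]); rw [List.isChain_append]
            refine ⟨ht.2.2, List.isChain_singleton c, ?_⟩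
            intro x hx y hy
            rw [List.getLast?_eq_getLast hne] at hx
            simp only [Option.mem_some_iff] at hx
            simp only [List.head?_cons, Option.mem_some_iff] at hy
            subst hx; subst hy
            exact fun h => hca h.symm
        obtain ⟨q, hq, h2, h3, h4, h5⟩ :=
          ih (p ++ [c]) (by simp [hp]) ht' (hmeasure _ (Or.inr hTE))
        exact ⟨q, hq, h2, h3, fun f hf => h4 f (by rw [hTE]; exact List.mem_append_left _ hf), h5⟩
    · push_neg at hex
      refine ⟨p, hne, by simp [hp], ht, fun e he => he, ?_⟩
      intro e heE henot
      have := hex e heE henot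
      tauto

def altSplit : List α → List α × List α
  | [] => ([], [])
  | a :: l => ((a :: (altSplit l).2), (altSplit l).1)

lemma altSplit_perm : ∀ (l : List α), ((altSplit l).1 ++ (altSplit l).2).Perm l
  | [] => List.Perm.refl _
  | a :: l => by
      simpa [altSplit] using ((List.perm_append_comm.trans (altSplit_perm l)).cons a)

lemma altSplit_len : ∀ (l : List α),
    (altSplit l).1.length + (altSplit l).2.length = l.length ∧
    (altSplit l).2.length ≤ (altSplit l).1.length ∧
    (altSplit l).1.length ≤ (altSplit l).2.length + 1
  | [] => by simp [altSplit]
  | a :: l => by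
      have := altSplit_len l
      simp only [altSplit, List.length_cons]
      omega


def gdiff (L : List (Sym2 V)) (v : V) : ℤ :=
  ((altSplit L).1.countP (fun e => v ∈ e) : ℤ) - (altSplit L).2.countP (fun e => v ∈ e)

lemma gdiff_nil (v : V) : gdiff [] v = 0 := rfl

lemma gdiff_cons (e : Sym2 V) (L : List (Sym2 V)) (v : V) :
    gdiff (e :: L) v = (if v ∈ e then 1 else 0) - gdiff L v := by
  simp only [gdiff, altSplit, List.countP_cons]
  by_cases h : v ∈ e <;> simp [h] <;> ring

lemma gdiff_formula (v : V) : ∀ (p : List V) (a : V), (a :: p).Chain' (· ≠ ·) →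
    gdiff (trailEdges (a :: p)) v =
      (if v = a then 1 else 0) -
        (-1) ^ p.length * (if v = (a :: p).getLast (by simp) then 1 else 0)
  | [], a, _ => by simp [gdiff_nil]; rw [eq_comm, sub_eq_zero]; congr
  | b :: q, a, hch => by
    have hab : a ≠ b := (List.isChain_cons_cons.mp hch).1
    have ih := gdiff_formula v q b (List.isChain_cons_cons.mp hch).2
    rw [trailEdges_cons₂, gdiff_cons, ih]
    have hlast : (a :: b :: q).getLast (by simp) = (b :: q).getLast (by simp) := by
      simp [List.getLast_cons]
    rw [hlast]
    have hmem : (if v ∈ s(a, b) then (1:ℤ) else 0) =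
        (if v = a then 1 else 0) + (if v = b then 1 else 0) := by
      by_cases h1 : v = a <;> by_cases h2 : v = b <;>
        simp [h1, h2, Sym2.mem_iff] at * <;> tauto
    rw [hmem]
    simp only [List.length_cons, pow_succ]
    ring



def deg (E : Finset (Sym2 V)) (v : V) : ℕ := (E.filter (fun e => v ∈ e)).card

lemma deg_union {A B : Finset (Sym2 V)} (h : Disjoint A B) (v : V) :
    deg (A ∪ B) v = deg A v + deg B v := by
  unfold deg
  rw [Finset.filter_union, Finset.card_union_of_disjoint]
  exact Finset.disjoint_filter_filter h

lemma deg_eq_zero {A : Finset (Sym2 V)} {v : V} (h : ∀ e ∈ A, v ∉ e) : deg A v = 0 := by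
  unfold deg
  rw [Finset.card_eq_zero, Finset.filter_eq_empty_iff]
  exact h

lemma deg_toFinset (l : List (Sym2 V)) (h : l.Nodup) (v : V) :
    deg l.toFinset v = l.countP (fun e => v ∈ e) := by
  unfold deg
  rw [List.countP_eq_length_filter]
  have h1 : l.toFinset.filter (fun e => v ∈ e) = (l.filter (fun e => v ∈ e)).toFinset := by
    rw [List.toFinset_filter]
    congr 1
    ext e
    simp
  rw [h1, List.toFinset_card_of_nodup (h.filter _)]


lemma gdiff_bound (v : V) (q : List V) (hq : q ≠ []) (hch : q.Chain' (· ≠ ·)) :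
    |gdiff (trailEdges q) v| ≤ 2 ∧
      (v ≠ q.head hq → v ≠ q.getLast hq → gdiff (trailEdges q) v = 0) := by
  obtain ⟨h, t, rfl⟩ : ∃ h t, q = h :: t := by
    cases q with
    | nil => exact absurd rfl hq
    | cons h t => exact ⟨h, t, rfl⟩
  rw [gdiff_formula v t h hch]
  have hpow : ((-1 : ℤ) ^ t.length = 1 ∨ (-1 : ℤ) ^ t.length = -1) := neg_one_pow_eq_or ℤ _
  have hhead : (h :: t).head hq = h := rfl
  constructor
  · set A := (if v = h then (1:ℤ) else 0) with hA
    set B := (if v = (h :: t).getLast (by simp) then (1:ℤ) else 0) with hB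
    have hA01 : A = 0 ∨ A = 1 := by rw [hA]; split <;> simp
    have hB01 : B = 0 ∨ B = 1 := by rw [hB]; split <;> simp
    rcases hA01 with h1 | h1 <;> rcases hB01 with h2 | h2 <;> rcases hpow with hp | hp <;>
      rw [h1, h2, hp] <;> norm_num
  · intro h1 h2
    rw [hhead] at h1
    simp [h1, h2]

lemma split2 : ∀ (N : ℕ) (E : Finset (Sym2 V)), E.card ≤ N → (∀ e ∈ E, ¬ e.IsDiag) →
    ∃ E₁ E₂ : Finset (Sym2 V), E₁ ∪ E₂ = E ∧ Disjoint E₁ E₂ ∧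
      (∀ v, |(deg E₁ v : ℤ) - (deg E₂ v : ℤ)| ≤ 2) ∧
      |(E₁.card : ℤ) - (E₂.card : ℤ)| ≤ 1 := by
  intro N
  induction N with
  | zero =>
    intro E hcard _
    refine ⟨∅, ∅, ?_, Finset.disjoint_empty_left _, by simp [deg], by simp⟩
    have : E = ∅ := Finset.card_eq_zero.mp (Nat.le_zero.mp hcard)
    simp [this]
  | succ N ih =>
    intro E hcard hnd
    rcases Finset.eq_empty_or_nonempty E with rfl | ⟨e, heE⟩
    · exact ⟨∅, ∅, by simp, Finset.disjoint_empty_left _, by simp [deg], by simp⟩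
    obtain ⟨a, b, rfl⟩ : ∃ a b, e = s(a, b) := by
      induction e using Sym2.ind with | _ a b => exact ⟨a, b, rfl⟩
    have hab : a ≠ b := by
      have := hnd _ heE
      rwa [Sym2.mk_isDiag_iff] at this
    have htrail0 : IsTrail E [a, b] := by
      refine ⟨by simp, ?_, List.isChain_pair.mpr hab⟩
      intro f hf
      simp only [trailEdges_cons₂, trailEdges_single, List.mem_singleton] at hf
      rw [hf]; exact heE
    obtain ⟨q, hq, hlen2, htq, hext, hmax⟩ :=
      exists_maximal_trail E hnd ((E \ (trailEdges [a, b]).toFinset).card) [a, b]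
        (by simp) htrail0 le_rfl
    have heq : s(a, b) ∈ trailEdges q := hext _ (by simp)
    set L := trailEdges q with hL
    have hnodup : L.Nodup := htq.1
    have hsubE : L.toFinset ⊆ E := by
      intro f hf
      exact htq.2.1 f (List.mem_toFinset.mp hf)
    set E' := E \ L.toFinset with hE'
    have hcard' : E'.card ≤ N := by
      have h1 : E'.card < E.card := by
        apply Finset.card_lt_card
        constructor
        · exact Finset.sdiff_subset
        · intro hsub
          have := hsub (hsubE (List.mem_toFinset.mpr heq))
          rw [hE', Finset.mem_sdiff] at this
          exact this.2 (List.mem_toFinset.mpr heq)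
      omega
    obtain ⟨F₁, F₂, hunion, hdisjF, hdegF, hcardF⟩ :=
      ih E' hcard' (fun f hf => hnd f (Finset.sdiff_subset hf))
    set s1 := (altSplit L).1 with hs1
    set s2 := (altSplit L).2 with hs2
    have hperm : (s1 ++ s2).Perm L := altSplit_perm L
    have happ : (s1 ++ s2).Nodup := hperm.nodup_iff.mpr hnodup
    obtain ⟨hn1, hn2, hdl⟩ := List.nodup_append.mp happ
    set L₁ := s1.toFinset with hL₁
    set L₂ := s2.toFinset with hL₂
    have hL12 : L₁ ∪ L₂ = L.toFinset := by
      rw [hL₁, hL₂, ← List.toFinset_append]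
      exact List.toFinset_eq_of_perm _ _ hperm
    have hdisj12 : Disjoint L₁ L₂ := by
      rw [Finset.disjoint_left]
      intro f hf1 hf2
      exact hdl _ (List.mem_toFinset.mp hf1) _ (List.mem_toFinset.mp hf2) rfl
    have hdegL : ∀ v, (deg L₁ v : ℤ) - (deg L₂ v : ℤ) = gdiff L v := by
      intro v
      rw [hL₁, hL₂, deg_toFinset _ hn1, deg_toFinset _ hn2]
      rfl
    -- disjointness of F's and L's
    have hFL : ∀ (F LL : Finset (Sym2 V)), F ⊆ E' → LL ⊆ L.toFinset → Disjoint F LL := by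
      intro F LL hF hLL
      rw [Finset.disjoint_left]
      intro f hf1 hf2
      have := hF hf1
      rw [hE', Finset.mem_sdiff] at this
      exact this.2 (hLL hf2)
    have hF₁ : F₁ ⊆ E' := hunion ▸ Finset.subset_union_left
    have hF₂ : F₂ ⊆ E' := hunion ▸ Finset.subset_union_right
    have hL₁sub : L₁ ⊆ L.toFinset := hL12 ▸ Finset.subset_union_left
    have hL₂sub : L₂ ⊆ L.toFinset := hL12 ▸ Finset.subset_union_right
    -- endpoint degrees vanish
    have hend : ∀ v, (v = q.head hq ∨ v = q.getLast hq) → deg F₁ v = 0 ∧ deg F₂ v = 0 := by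
      intro v hv
      constructor <;>
      · apply deg_eq_zero
        intro f hf
        have hfE' : f ∈ E' := by first | exact hF₁ hf | exact hF₂ hf
        rw [hE', Finset.mem_sdiff] at hfE'
        have := hmax f hfE'.1 (fun hfl => hfE'.2 (List.mem_toFinset.mpr hfl))
        rcases hv with rfl | rfl
        · exact this.1
        · exact this.2
    have hgb := fun (v : V) => gdiff_bound v q hq htq.2.2
    -- degree bound for any choice of orientation
    have hkey : ∀ v, |((deg F₁ v : ℤ) - deg F₂ v) - gdiff L v| ≤ 2 ∧
        |((deg F₁ v : ℤ) - deg F₂ v) + gdiff L v| ≤ 2 := by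
      intro v
      by_cases hv : v = q.head hq ∨ v = q.getLast hq
      · obtain ⟨h1, h2⟩ := hend v hv
        rw [h1, h2]
        have h3 := (hgb v).1
        rw [← hL] at h3
        constructor <;> simp <;> omega
      · push_neg at hv
        have h0 := (hgb v).2 hv.1 hv.2
        rw [← hL] at h0
        rw [h0]
        have := hdegF v
        constructor <;> simp <;> omega
    -- sizes
    have hlen := altSplit_len L
    have hcardL₁ : L₁.card = s1.length := List.toFinset_card_of_nodup hn1
    have hcardL₂ : L₂.card = s2.length := List.toFinset_card_of_nodup hn2
    have hunion' : E' ∪ L.toFinset = E := Finset.sdiff_union_of_subset hsubE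
    -- assemble
    have hassemble : ∀ (A B : Finset (Sym2 V)), A = L₁ ∧ B = L₂ ∨ A = L₂ ∧ B = L₁ →
        (F₁ ∪ A) ∪ (F₂ ∪ B) = E ∧ Disjoint (F₁ ∪ A) (F₂ ∪ B) ∧
        ∀ v, deg (F₁ ∪ A) v = deg F₁ v + deg A v ∧ deg (F₂ ∪ B) v = deg F₂ v + deg B v ∧
          (F₁ ∪ A).card = F₁.card + A.card ∧ (F₂ ∪ B).card = F₂.card + B.card := by
      intro A B hAB
      have hA : A ⊆ L.toFinset := by rcases hAB with ⟨rfl, _⟩ | ⟨rfl, _⟩ <;> assumption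
      have hB : B ⊆ L.toFinset := by rcases hAB with ⟨_, rfl⟩ | ⟨_, rfl⟩ <;> assumption
      have hABdisj : Disjoint A B := by
        rcases hAB with ⟨rfl, rfl⟩ | ⟨rfl, rfl⟩
        · exact hdisj12
        · exact hdisj12.symm
      have hABL : A ∪ B = L.toFinset := by
        rcases hAB with ⟨rfl, rfl⟩ | ⟨rfl, rfl⟩
        · exact hL12
        · rw [Finset.union_comm]; exact hL12
      refine ⟨?_, ?_, ?_⟩
      · ext f
        have h1 : f ∈ F₁ ∨ f ∈ F₂ ↔ f ∈ E' := by rw [← Finset.mem_union, hunion]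
        have h2 : f ∈ A ∨ f ∈ B ↔ f ∈ L.toFinset := by rw [← Finset.mem_union, hABL]
        have h3 : f ∈ E' ∨ f ∈ L.toFinset ↔ f ∈ E := by rw [← Finset.mem_union, hunion']
        simp only [Finset.mem_union]
        tauto
      · rw [Finset.disjoint_union_left]
        constructor <;> rw [Finset.disjoint_union_right]
        · exact ⟨hdisjF, hFL F₁ B hF₁ hB⟩
        · exact ⟨(hFL F₂ A hF₂ hA).symm, hABdisj⟩
      · intro v
        exact ⟨deg_union (hFL F₁ A hF₁ hA) v, deg_union (hFL F₂ B hF₂ hB) v,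
          Finset.card_union_of_disjoint (hFL F₁ A hF₁ hA),
          Finset.card_union_of_disjoint (hFL F₂ B hF₂ hB)⟩
    rcases le_or_gt 0 ((F₁.card : ℤ) - F₂.card) with hD | hD
    · -- F₁ is larger: give it the smaller trail part L₂
      obtain ⟨hU, hDj, hP⟩ := hassemble L₂ L₁ (Or.inr ⟨rfl, rfl⟩)
      refine ⟨F₁ ∪ L₂, F₂ ∪ L₁, hU, hDj, ?_, ?_⟩
      · intro v
        obtain ⟨e1, e2, _, _⟩ := hP v
        have hd1 : (deg (F₁ ∪ L₂) v : ℤ) = (deg F₁ v : ℤ) + (deg L₂ v : ℤ) := by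
          exact_mod_cast congrArg (Nat.cast : ℕ → ℤ) e1
        have hd2 : (deg (F₂ ∪ L₁) v : ℤ) = (deg F₂ v : ℤ) + (deg L₁ v : ℤ) := by
          exact_mod_cast congrArg (Nat.cast : ℕ → ℤ) e2
        have h1 := (hkey v).1
        have h2 := hdegL v
        rw [abs_le] at h1 ⊢
        omega
      · obtain ⟨_, _, c1, c2⟩ := hP a
        have hc1 : ((F₁ ∪ L₂).card : ℤ) = (F₁.card : ℤ) + (L₂.card : ℤ) := by
          exact_mod_cast congrArg (Nat.cast : ℕ → ℤ) c1
        have hc2 : ((F₂ ∪ L₁).card : ℤ) = (F₂.card : ℤ) + (L₁.card : ℤ) := by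
          exact_mod_cast congrArg (Nat.cast : ℕ → ℤ) c2
        have hcF := hcardF
        have hz1 : (L₁.card : ℤ) = ((altSplit L).1.length : ℤ) := by exact_mod_cast hcardL₁
        have hz2 : (L₂.card : ℤ) = ((altSplit L).2.length : ℤ) := by exact_mod_cast hcardL₂
        have hz3 : ((altSplit L).1.length : ℤ) + ((altSplit L).2.length : ℤ)
            = (L.length : ℤ) := by exact_mod_cast hlen.1
        have hz4 : ((altSplit L).2.length : ℤ) ≤ ((altSplit L).1.length : ℤ) := by
          exact_mod_cast hlen.2.1
        have hz5 : ((altSplit L).1.length : ℤ) ≤ ((altSplit L).2.length : ℤ) + 1 := by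
          exact_mod_cast hlen.2.2
        rw [abs_le] at hcF ⊢
        constructor <;> linarith [hc1, hc2, hcF.1, hcF.2, hz1, hz2, hz4, hz5]
    · obtain ⟨hU, hDj, hP⟩ := hassemble L₁ L₂ (Or.inl ⟨rfl, rfl⟩)
      refine ⟨F₁ ∪ L₁, F₂ ∪ L₂, hU, hDj, ?_, ?_⟩
      · intro v
        obtain ⟨e1, e2, _, _⟩ := hP v
        have hd1 : (deg (F₁ ∪ L₁) v : ℤ) = (deg F₁ v : ℤ) + (deg L₁ v : ℤ) := by
          exact_mod_cast congrArg (Nat.cast : ℕ → ℤ) e1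
        have hd2 : (deg (F₂ ∪ L₂) v : ℤ) = (deg F₂ v : ℤ) + (deg L₂ v : ℤ) := by
          exact_mod_cast congrArg (Nat.cast : ℕ → ℤ) e2
        have h1 := (hkey v).2
        have h2 := hdegL v
        rw [abs_le] at h1 ⊢
        omega
      · obtain ⟨_, _, c1, c2⟩ := hP a
        have hc1 : ((F₁ ∪ L₁).card : ℤ) = (F₁.card : ℤ) + (L₁.card : ℤ) := by
          exact_mod_cast congrArg (Nat.cast : ℕ → ℤ) c1
        have hc2 : ((F₂ ∪ L₂).card : ℤ) = (F₂.card : ℤ) + (L₂.card : ℤ) := by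
          exact_mod_cast congrArg (Nat.cast : ℕ → ℤ) c2
        have hcF := hcardF
        have hz1 : (L₁.card : ℤ) = ((altSplit L).1.length : ℤ) := by exact_mod_cast hcardL₁
        have hz2 : (L₂.card : ℤ) = ((altSplit L).2.length : ℤ) := by exact_mod_cast hcardL₂
        have hz3 : ((altSplit L).1.length : ℤ) + ((altSplit L).2.length : ℤ)
            = (L.length : ℤ) := by exact_mod_cast hlen.1
        have hz4 : ((altSplit L).2.length : ℤ) ≤ ((altSplit L).1.length : ℤ) := by
          exact_mod_cast hlen.2.1
        have hz5 : ((altSplit L).1.length : ℤ) ≤ ((altSplit L).2.length : ℤ) + 1 := by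
          exact_mod_cast hlen.2.2
        rw [abs_le] at hcF ⊢
        constructor <;> linarith [hc1, hc2, hcF.1, hcF.2, hz1, hz2, hz4, hz5]

lemma eqsplit (k : ℕ) : ∀ (E : Finset (Sym2 V)), (∀ e ∈ E, ¬ e.IsDiag) →
    ∃ (ι : Type) (_ : Fintype ι) (P : ι → Finset (Sym2 V)),
      Fintype.card ι = 2 ^ k ∧
      (∀ i, P i ⊆ E) ∧
      (∀ i j, i ≠ j → Disjoint (P i) (P j)) ∧
      (∑ i, (P i).card = E.card) ∧
      (∀ i v, |(2 : ℤ) ^ k * (deg (P i) v : ℤ) - (deg E v : ℤ)| ≤ 2 * (2 ^ k - 1)) ∧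
      (∀ i, |(2 : ℤ) ^ k * ((P i).card : ℤ) - (E.card : ℤ)| ≤ 2 ^ k - 1) := by
  induction k with
  | zero =>
    intro E _
    refine ⟨Fin 1, inferInstance, fun _ => E, by simp, fun _ => le_rfl,
      fun i j hij => absurd (Subsingleton.elim i j) hij, by simp, ?_, ?_⟩ <;>
      intros <;> simp
  | succ k ih =>
    intro E hnd
    obtain ⟨E₁, E₂, hU, hDj, hdeg, hcard⟩ := split2 E.card E le_rfl hnd
    have hE₁ : E₁ ⊆ E := hU ▸ Finset.subset_union_left
    have hE₂ : E₂ ⊆ E := hU ▸ Finset.subset_union_right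
    obtain ⟨ι₁, if₁, P₁, hc₁, hs₁, hd₁, hsum₁, hdeg₁, hcard₁⟩ :=
      ih E₁ (fun e he => hnd e (hE₁ he))
    obtain ⟨ι₂, if₂, P₂, hc₂, hs₂, hd₂, hsum₂, hdeg₂, hcard₂⟩ :=
      ih E₂ (fun e he => hnd e (hE₂ he))
    have hdegE : ∀ v, deg E v = deg E₁ v + deg E₂ v := by
      intro v; rw [← hU, deg_union hDj]
    have hcardE : E.card = E₁.card + E₂.card := by
      rw [← hU, Finset.card_union_of_disjoint hDj]
    have h2 : (2 : ℤ) ^ (k + 1) = 2 * 2 ^ k := by rw [pow_succ]; ring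
    have h2pos : (1 : ℤ) ≤ 2 ^ k := one_le_pow₀ (by norm_num)
    refine ⟨ι₁ ⊕ ι₂, inferInstance, Sum.elim P₁ P₂, ?_, ?_, ?_, ?_, ?_, ?_⟩
    · simp [Fintype.card_sum, hc₁, hc₂, pow_succ]; ring
    · rintro (i | i) <;> simp only [Sum.elim_inl, Sum.elim_inr]
      · exact (hs₁ i).trans hE₁
      · exact (hs₂ i).trans hE₂
    · rintro (i | i) (j | j) hij <;> simp only [Sum.elim_inl, Sum.elim_inr]
      · exact hd₁ i j (fun h => hij (by rw [h]))
      · exact Finset.disjoint_of_subset_left (hs₁ i)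
          (Finset.disjoint_of_subset_right (hs₂ j) hDj)
      · exact Finset.disjoint_of_subset_left (hs₂ i)
          (Finset.disjoint_of_subset_right (hs₁ j) hDj.symm)
      · exact hd₂ i j (fun h => hij (by rw [h]))
    · rw [Fintype.sum_sum_type]
      simp only [Sum.elim_inl, Sum.elim_inr]
      rw [hsum₁, hsum₂, hcardE]
    · rintro (i | i) v <;> simp only [Sum.elim_inl, Sum.elim_inr]
      · have ha := hdeg₁ i v
        have hb := hdeg v
        have hc : (deg E v : ℤ) = (deg E₁ v : ℤ) + (deg E₂ v : ℤ) := by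
          exact_mod_cast hdegE v
        rw [abs_le] at ha hb ⊢
        rw [h2, hc]
        constructor <;> nlinarith [ha.1, ha.2, hb.1, hb.2]
      · have ha := hdeg₂ i v
        have hb := hdeg v
        have hc : (deg E v : ℤ) = (deg E₁ v : ℤ) + (deg E₂ v : ℤ) := by
          exact_mod_cast hdegE v
        rw [abs_le] at ha hb ⊢
        rw [h2, hc]
        constructor <;> nlinarith [ha.1, ha.2, hb.1, hb.2]
    · rintro (i | i) <;> simp only [Sum.elim_inl, Sum.elim_inr]
      · have ha := hcard₁ i
        have hb := hcard
        have hc : (E.card : ℤ) = (E₁.card : ℤ) + (E₂.card : ℤ) := by exact_mod_cast hcardE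
        rw [abs_le] at ha hb ⊢
        rw [h2, hc]
        constructor <;> nlinarith [ha.1, ha.2, hb.1, hb.2]
      · have ha := hcard₂ i
        have hb := hcard
        have hc : (E.card : ℤ) = (E₁.card : ℤ) + (E₂.card : ℤ) := by exact_mod_cast hcardE
        rw [abs_le] at ha hb ⊢
        rw [h2, hc]
        constructor <;> nlinarith [ha.1, ha.2, hb.1, hb.2]

lemma sum_ind [Fintype V] (S : Finset (Sym2 V)) (c : ℝ) :
    ∑ e : Sym2 V, (if e ∈ S then c else 0) = S.card * c := by
  rw [Finset.sum_ite_mem, Finset.univ_inter, Finset.sum_const, nsmul_eq_mul]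

end StmtAux

open StmtAux in
/-- For every `ε > 0` and every uniform fractional matching `x` in a graph `G = (V,E)`,
there exists a `(4ε, ε)`-split of `x`: vectors `z⁽¹⁾, …, z⁽ᵏ⁾ ∈ ℝ_{≥0}^E`, each a
`(4ε, ε)`-coarsening of `x`, with pairwise disjoint supports contained in `supp(x)`, such that
`Σ_i |supp(z⁽ⁱ⁾)| ≥ |supp(x)|/2`. -/
theorem stmt_12 (G : SimpleGraph V) (ε : ℝ) (hε : 0 < ε)
    (x : Sym2 V → ℝ)
    (hxnn : ∀ e, 0 ≤ x e) (hsupp : ∀ e, x e ≠ 0 → e ∈ G.edgeSet)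
    (hfm : ∀ v, fracDeg x v ≤ 1)
    (huniform : ∃ lam : ℝ, 0 < lam ∧ ∀ e, x e ≠ 0 → x e = lam) :
    ∃ (k : ℕ) (z : Fin k → Sym2 V → ℝ),
      (∀ i, IsCoarsening (4 * ε) ε x (z i)) ∧
      (∀ i, ∀ e, z i e ≠ 0 → x e ≠ 0) ∧
      (∀ i j, i ≠ j → ∀ e, z i e ≠ 0 → z j e = 0) ∧
      ((Finset.univ.filter (fun e : Sym2 V => x e ≠ 0)).card : ℝ) / 2 ≤
        ∑ i, ((Finset.univ.filter (fun e : Sym2 V => z i e ≠ 0)).card : ℝ) := by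
  classical
  obtain ⟨lam, hlam, hunif⟩ := huniform
  have hvnx : 0 ≤ vnorm x := Finset.sum_nonneg (fun e _ => hxnn e)
  set S := Finset.univ.filter (fun e : Sym2 V => x e ≠ 0) with hS
  have hmemS : ∀ e, e ∈ S ↔ x e ≠ 0 := by
    intro e; rw [hS, Finset.mem_filter]; simp
  rcases le_or_gt ε lam with hcase | hcase
  · -- trivial case : x itself works
    refine ⟨1, fun _ => x, ?_, ?_, ?_, ?_⟩
    · intro _
      refine ⟨hxnn, fun e h => h, ?_, ?_, ?_, fun e _ => rfl⟩
      · rw [sub_self, abs_zero]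
        have : 0 ≤ 4 * ε * vnorm x := by positivity
        linarith
      · have : dV (4 * ε) x x = 0 := by
          apply Finset.sum_eq_zero
          intro v _
          rw [sub_self, abs_zero]
          apply max_eq_right
          linarith
        rw [this]
        have : 0 ≤ 4 * ε * vnorm x := by positivity
        linarith
      · intro e he
        left
        by_contra h
        have := hunif e h
        linarith [this ▸ he]
    · exact fun _ e h => h
    · intro i j hij
      exact absurd (Subsingleton.elim i j) hij
    · rw [Fin.sum_univ_one]
      have : (0:ℝ) ≤ (S.card : ℝ) := by positivity
      rw [← hS]
      linarith
  · -- main case : lam < ε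
    have hex : ∃ K : ℕ, ε ≤ 2 ^ K * lam := by
      obtain ⟨n, hn⟩ := pow_unbounded_of_one_lt (ε / lam) one_lt_two
      exact ⟨n, by rw [div_lt_iff₀ hlam] at hn; linarith⟩
    set K := Nat.find hex with hKdef
    have hK : ε ≤ 2 ^ K * lam := Nat.find_spec hex
    have hK1 : 1 ≤ K := by
      by_contra h
      push_neg at h
      interval_cases K
      · simp at hK; linarith
    have hKmin : ¬ ε ≤ 2 ^ (K - 1) * lam := Nat.find_min hex (by omega)
    push_neg at hKmin
    have hK2 : 2 ^ K * lam < 2 * ε := by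
      obtain ⟨K', hKe⟩ : ∃ K', K = K' + 1 := ⟨K - 1, by omega⟩
      have hKm : 2 ^ K' * lam < ε := by
        have : K - 1 = K' := by omega
        rwa [this] at hKmin
      have : (2:ℝ) ^ K = 2 * 2 ^ K' := by rw [hKe, pow_succ]; ring
      rw [this]
      nlinarith
    have hnd : ∀ e ∈ S, ¬ e.IsDiag := by
      intro e he
      exact (SimpleGraph.not_isDiag_of_mem_edgeSet G (hsupp e ((hmemS e).mp he)))
    obtain ⟨ι, _, P, hcι, hsub, hdisj, hsum, hdegb, hcardb⟩ := eqsplit K S hnd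
    set c : ℝ := 2 ^ K * lam with hc
    have hcpos : 0 < c := by positivity
    set eqv := Fintype.equivFin ι with heqv
    refine ⟨Fintype.card ι, fun i => fun e => if e ∈ P (eqv.symm i) then c else 0,
      ?_, ?_, ?_, ?_⟩
    · intro i
      set T := P (eqv.symm i) with hT
      show IsCoarsening (4 * ε) ε x (fun e => if e ∈ T then c else 0)
      set z : Sym2 V → ℝ := fun e => if e ∈ T then c else 0 with hz
      have hvz : vnorm z = T.card * c := sum_ind T c
      have hvx : vnorm x = S.card * lam := by
        have : x = fun e => if e ∈ S then lam else 0 := by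
          funext e
          by_cases h : x e ≠ 0
          · rw [if_pos ((hmemS e).mpr h)]; exact hunif e h
          · push_neg at h
            rw [if_neg (fun hh => (hmemS e).mp hh h)]; exact h
        rw [show vnorm x = vnorm (fun e => if e ∈ S then lam else 0) by rw [← this]]
        exact sum_ind S lam
      have hfz : ∀ v, fracDeg z v = (deg T v : ℝ) * c := by
        intro v
        unfold fracDeg
        rw [show ((deg T v : ℝ) * c) = ((T.filter (fun e => v ∈ e)).card : ℝ) * c from rfl,
          ← sum_ind (T.filter (fun e => v ∈ e)) c]
        apply Finset.sum_congr rfl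
        intro e _
        by_cases h1 : v ∈ e <;> by_cases h2 : e ∈ T <;>
          simp [hz, h1, h2, Finset.mem_filter]
      have hfx : ∀ v, fracDeg x v = (deg S v : ℝ) * lam := by
        intro v
        unfold fracDeg
        rw [show ((deg S v : ℝ) * lam) = ((S.filter (fun e => v ∈ e)).card : ℝ) * lam from rfl,
          ← sum_ind (S.filter (fun e => v ∈ e)) lam]
        apply Finset.sum_congr rfl
        intro e _
        have hx0 : e ∉ S → x e = 0 := fun h => not_not.mp (fun hh => h ((hmemS e).mpr hh))
        by_cases h1 : v ∈ e <;> by_cases h2 : e ∈ S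
        · simp [h1, h2, Finset.mem_filter, hunif e ((hmemS e).mp h2)]
        · simp [h1, h2, Finset.mem_filter, hx0 h2]
        · simp [h1, Finset.mem_filter]
        · simp [h1, Finset.mem_filter]
      have hcardR : |(2:ℝ) ^ K * (T.card : ℝ) - (S.card : ℝ)| ≤ 2 ^ K - 1 := by
        exact_mod_cast hcardb (eqv.symm i)
      have hdegR : ∀ v, |(2:ℝ) ^ K * (deg T v : ℝ) - (deg S v : ℝ)| ≤ 2 * (2 ^ K - 1) := by
        intro v
        exact_mod_cast hdegb (eqv.symm i) v
      have hSnn : (0:ℝ) ≤ (S.card : ℝ) := by positivity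
      refine ⟨?_, ?_, ?_, ?_, ?_, ?_⟩
      · intro e
        rw [hz]
        dsimp only
        split
        · linarith
        · exact le_rfl
      · intro e he
        rw [hz] at he
        dsimp only at he
        split at he
        · next h => exact (hmemS e).mp (hsub (eqv.symm i) h)
        · exact absurd rfl he
      · rw [hvx, hvz]
        have heq : (S.card : ℝ) * lam - (T.card : ℝ) * c = lam * ((S.card : ℝ) - 2 ^ K * T.card) := by
          rw [hc]; ring
        rw [heq, abs_mul, abs_of_pos hlam, abs_sub_comm]
        have h1 : lam * |(2:ℝ) ^ K * (T.card : ℝ) - S.card| ≤ lam * (2 ^ K - 1) :=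
          mul_le_mul_of_nonneg_left hcardR (le_of_lt hlam)
        have h2 : lam * ((2:ℝ) ^ K - 1) < 2 * ε := by nlinarith
        have h3 : 0 ≤ 4 * ε * ((S.card : ℝ) * lam) := by positivity
        linarith
      · have hdv : dV (4 * ε) x z = 0 := by
          apply Finset.sum_eq_zero
          intro v _
          apply max_eq_right
          rw [hfx v, hfz v]
          have heq : (deg S v : ℝ) * lam - (deg T v : ℝ) * c
              = lam * ((deg S v : ℝ) - 2 ^ K * deg T v) := by rw [hc]; ring
          rw [heq, abs_mul, abs_of_pos hlam, abs_sub_comm]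
          have h1 : lam * |(2:ℝ) ^ K * (deg T v : ℝ) - deg S v| ≤ lam * (2 * (2 ^ K - 1)) :=
            mul_le_mul_of_nonneg_left (hdegR v) (le_of_lt hlam)
          have h2 : lam * (2 * ((2:ℝ) ^ K - 1)) < 4 * ε := by nlinarith
          linarith
        rw [hdv]
        have h3 : 0 ≤ 4 * ε * vnorm x := by positivity
        linarith
      · intro e _
        rw [hz]
        dsimp only
        split
        · right
          constructor
          · rw [hc]; exact hK
          · rw [hc]; linarith
        · left; rfl
      · intro e he
        exfalso
        have hne : x e ≠ 0 := by intro h; rw [h] at he; linarith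
        have := hunif e hne
        linarith
    · intro i e he
      dsimp only at he
      split at he
      · next h => exact (hmemS e).mp (hsub (eqv.symm i) h)
      · exact absurd rfl he
    · intro i j hij e hie
      dsimp only at hie ⊢
      split at hie
      · next h =>
        have hne : eqv.symm i ≠ eqv.symm j := fun hh => hij (by
          have := congrArg eqv hh
          simpa using this)
        have := hdisj _ _ hne
        rw [if_neg (Finset.disjoint_left.mp this h)]
      · exact absurd rfl hie
    · have hfilter : ∀ i, Finset.univ.filter
          (fun e : Sym2 V => (if e ∈ P (eqv.symm i) then c else 0) ≠ 0) = P (eqv.symm i) := by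
        intro i
        ext e
        simp only [Finset.mem_filter, Finset.mem_univ, true_and]
        split
        · next h => simpa [h] using (by linarith : c ≠ 0)
        · next h => simp [h]
      have hsum2 : ∑ i : Fin (Fintype.card ι), ((P (eqv.symm i)).card : ℝ) = (S.card : ℝ) := by
        rw [← Nat.cast_sum]
        congr 1
        rw [← hsum]
        exact Fintype.sum_equiv eqv.symm _ _ (fun i => rfl)
      have hSnn : (0:ℝ) ≤ (S.card : ℝ) := Nat.cast_nonneg _
      calc (S.card : ℝ) / 2 ≤ (S.card : ℝ) := by linarith
        _ = _ := by rw [← hsum2]; apply Finset.sum_congr rfl; intro i _; rw [hfilter i]
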